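/- Fix n ≥ 2. There is no ℤ₂^{n+1}-equivariant triangulation X of the sphere Sⁿ in ℝ^{n+1} such that X has exactly 2^{n+1} vertices and some vertex (x₁, …, x_{n+1}) of X has all of x₁, …, x_{n+1} nonzero. -/

import Mathlib

open Set

noncomputable section

/-- The sign-change map `x ↦ (ε₁x₁, …, εₙxₙ)` on `EuclideanSpace ℝ (Fin n)`. -/
def signMap {n : ℕ} (ε : Fin n → ℝ) (x : EuclideanSpace ℝ (Fin n)) :
    EuclideanSpace ℝ (Fin n) :=
  WithLp.toLp 2 (fun i => ε i * x i)

/-- `X` is a `ℤ₂ⁿ`-equivariant triangulation of the unit sphere `S^{n-1} ⊆ ℝⁿ`. -/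
structure IsEquivSphereTriangulation (n : ℕ)
    (X : Geometry.SimplicialComplex ℝ (EuclideanSpace ℝ (Fin n))) : Prop where
  finite : X.faces.Finite
  zero_not_mem : (0 : EuclideanSpace ℝ (Fin n)) ∉ X.space
  radial_homeo : ∃ φ : X.space ≃ₜ (Metric.sphere (0 : EuclideanSpace ℝ (Fin n)) 1),
      ∀ x : X.space, (φ x : EuclideanSpace ℝ (Fin n)) =
        ‖(x : EuclideanSpace ℝ (Fin n))‖⁻¹ • (x : EuclideanSpace ℝ (Fin n))
  equivariant : ∀ ε : Fin n → ℝ, (∀ i, ε i = 1 ∨ ε i = -1) →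
      ∀ s ∈ X.faces, ∃ t ∈ X.faces,
        (t : Set (EuclideanSpace ℝ (Fin n))) = signMap ε '' (s : Set (EuclideanSpace ℝ (Fin n)))

lemma signMap_isLinear {m : ℕ} (ε : Fin m → ℝ) : IsLinearMap ℝ (signMap ε) := by
  constructor
  · intro x y
    ext i
    simp [signMap, mul_add]
  · intro c x
    ext i
    simp [signMap]
    ring

lemma signMap_injective {m : ℕ} {ε : Fin m → ℝ} (h : ∀ i, ε i ≠ 0) :
    Function.Injective (signMap ε) := fun x y hxy =>
  PiLp.ext fun i => mul_left_cancel₀ (h i) (congrArg (fun z : EuclideanSpace ℝ (Fin m) => z i) hxy)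

abbrev Esp (m : ℕ) := EuclideanSpace ℝ (Fin m)

set_option maxHeartbeats 2000000 in
theorem stmt2 (n : ℕ) (hn : 2 ≤ n) :
    ¬ ∃ X : Geometry.SimplicialComplex ℝ (EuclideanSpace ℝ (Fin (n + 1))),
      IsEquivSphereTriangulation (n + 1) X ∧ X.vertices.ncard = 2 ^ (n + 1) ∧
      ∃ v ∈ X.vertices, ∀ i : Fin (n + 1), v i ≠ 0 := by
  classical
  rintro ⟨X, hX, hcard, v, hv, hvne⟩
  let E := Esp (n + 1)
  -- vertices form a finite set
  have hVfin : X.vertices.Finite := by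
    have heq : X.vertices = (fun x : E => ({x} : Finset E)) ⁻¹' X.faces := rfl
    rw [heq]
    exact hX.finite.preimage (fun a _ b _ h => Finset.singleton_injective h)
  -- the sign-orbit of any vertex consists of vertices
  have horb : ∀ ε : Fin (n + 1) → ℝ, (∀ i, ε i = 1 ∨ ε i = -1) →
      ∀ x ∈ X.vertices, signMap ε x ∈ X.vertices := by
    intro ε hε x hx
    obtain ⟨t, ht, hts⟩ := hX.equivariant ε hε {x} hx
    have h1 : (t : Set E) = ({signMap ε x} : Finset E) := by rw [hts]; simp
    have h2 : t = {signMap ε x} := Finset.coe_injective h1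
    rwa [Geometry.SimplicialComplex.mem_vertices, ← h2]
  -- the orbit of v
  set F : (Fin (n + 1) → Bool) → E :=
    fun b => signMap (fun i => if b i then (1 : ℝ) else -1) v with hF
  have hFinj : Function.Injective F := by
    intro a b h
    funext i
    have h' : (if a i then (1 : ℝ) else -1) * v i = (if b i then (1 : ℝ) else -1) * v i :=
      congrArg (fun z : E => z i) h
    have h'' := mul_right_cancel₀ (hvne i) h'
    cases hai : a i <;> cases hbi : b i <;> simp [hai, hbi] at h'' ⊢ <;> norm_num at h''
  have hOrbsub : Set.range F ⊆ X.vertices := by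
    rintro _ ⟨b, rfl⟩
    exact horb _ (fun i => by cases b i <;> simp) v hv
  have hOrbcard : (Set.range F).ncard = 2 ^ (n + 1) := by
    rw [← Set.image_univ, Set.ncard_image_of_injective _ hFinj, Set.ncard_univ,
      Nat.card_eq_fintype_card, Fintype.card_fun]
    simp
  have hOrb : Set.range F = X.vertices :=
    Set.eq_of_subset_of_ncard_le hOrbsub (by rw [hcard, hOrbcard]) hVfin
  -- every vertex has all coordinates nonzero
  have hvx : ∀ x ∈ X.vertices, ∀ i : Fin (n + 1), x i ≠ 0 := by
    intro x hx i
    rw [← hOrb] at hx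
    obtain ⟨b, rfl⟩ := hx
    show (if b i then (1 : ℝ) else -1) * v i ≠ 0
    cases b i <;> simp [hvne i]
  -- the point of |X| on the positive first axis
  obtain ⟨φ, hφ⟩ := hX.radial_homeo
  have husphere : (EuclideanSpace.single (0 : Fin (n + 1)) (1 : ℝ) : E) ∈
      Metric.sphere (0 : E) 1 := by
    rw [mem_sphere_zero_iff_norm, EuclideanSpace.norm_single]
    norm_num
  set u : Metric.sphere (0 : E) 1 := ⟨_, husphere⟩ with hu
  set xp : X.space := φ.symm u with hxp
  set p : E := (xp : E) with hpdef
  have hpmem : p ∈ X.space := xp.2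
  have hp0 : p ≠ 0 := fun h => hX.zero_not_mem (h ▸ hpmem)
  have hpnorm : ‖p‖ ≠ 0 := norm_ne_zero_iff.2 hp0
  have h1 : ((φ (φ.symm u)) : E) = ‖p‖⁻¹ • p := hφ _
  rw [Homeomorph.apply_symm_apply] at h1
  have hp : p = ‖p‖ • (EuclideanSpace.single (0 : Fin (n + 1)) (1 : ℝ) : E) := by
    have h2 := congrArg (fun y : E => ‖p‖ • y) h1
    simp only [smul_smul, mul_inv_cancel₀ hpnorm, one_smul] at h2
    exact h2.symm
  have hpcoord : ∀ i : Fin (n + 1), i ≠ 0 → p i = 0 := by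
    intro i hi
    conv_lhs => rw [hp]
    simp [EuclideanSpace.single_apply, hi]
  -- a minimal face whose hull contains p
  have hex : ∃ m : ℕ, ∃ S ∈ X.faces, p ∈ convexHull ℝ (S : Set E) ∧ S.card = m := by
    obtain ⟨S, hS, hpS⟩ := Geometry.SimplicialComplex.mem_space_iff.1 hpmem
    exact ⟨S.card, S, hS, hpS, rfl⟩
  obtain ⟨S, hS, hpS, hScard⟩ := Nat.find_spec hex
  have hmin : ∀ T ∈ X.faces, p ∈ convexHull ℝ (T : Set E) → S.card ≤ T.card := by
    intro T hT hpT
    rw [hScard]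
    exact Nat.find_le ⟨T, hT, hpT, rfl⟩
  -- invariance of S under sign flips fixing the first coordinate
  have key : ∀ δ : Fin (n + 1) → ℝ, (∀ i, δ i = 1 ∨ δ i = -1) → δ 0 = 1 →
      ∀ w ∈ S, signMap δ w ∈ S := by
    intro δ hδ hδ0 w hw
    have hδne : ∀ i, δ i ≠ 0 := fun i => by rcases hδ i with h | h <;> rw [h] <;> norm_num
    obtain ⟨t, ht, hts⟩ := hX.equivariant δ hδ S hS
    have hfix : signMap δ p = p := by
      ext i
      by_cases hi : i = (0 : Fin (n + 1))
      · subst hi; show δ 0 * p 0 = p 0; rw [hδ0, one_mul]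
      · show δ i * p i = p i; rw [hpcoord i hi, mul_zero]
    have hpt : p ∈ convexHull ℝ (t : Set E) := by
      rw [hts, ← (signMap_isLinear δ).image_convexHull]
      exact ⟨p, hpS, hfix⟩
    have hint := X.inter_subset_convexHull hS ht ⟨hpS, hpt⟩
    have hne : (S ∩ t : Finset E) ≠ ∅ := by
      intro h
      rw [← Finset.coe_inter, h] at hint
      simp at hint
    have hface : S ∩ t ∈ X.faces := X.down_closed hS Finset.inter_subset_left (Finset.nonempty_iff_ne_empty.2 hne)
    have hcardle : S.card ≤ (S ∩ t).card := by
      apply hmin _ hface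
      rwa [Finset.coe_inter]
    have hSsub : S ⊆ t := by
      have h3 : S ∩ t = S := Finset.eq_of_subset_of_card_le Finset.inter_subset_left hcardle
      rw [← h3]
      exact Finset.inter_subset_right
    have htimg : t = S.image (signMap δ) :=
      Finset.coe_injective (by rw [hts, Finset.coe_image])
    have hcards : t.card = S.card := by
      rw [htimg, Finset.card_image_of_injective _ (signMap_injective hδne)]
    have hSt : S = t := Finset.eq_of_subset_of_card_le hSsub (le_of_eq hcards)
    have hmem : signMap δ w ∈ t := by
      rw [htimg]
      exact Finset.mem_image_of_mem _ hw
    rwa [hSt]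
  -- indices 1 and 2
  have h3 : 3 ≤ n + 1 := by omega
  set i₁ : Fin (n + 1) := ⟨1, by omega⟩ with hi₁
  set i₂ : Fin (n + 1) := ⟨2, by omega⟩ with hi₂
  have hi₁0 : i₁ ≠ 0 := by simp [hi₁, Fin.ext_iff]
  have hi₂0 : i₂ ≠ 0 := by simp [hi₂, Fin.ext_iff]
  have hi₁₂ : i₁ ≠ i₂ := by simp [hi₁, hi₂, Fin.ext_iff]
  set δ₁ : Fin (n + 1) → ℝ := fun i => if i = i₁ then -1 else 1 with hδ₁
  set δ₂ : Fin (n + 1) → ℝ := fun i => if i = i₂ then -1 else 1 with hδ₂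
  have hδ₁pm : ∀ i, δ₁ i = 1 ∨ δ₁ i = -1 := fun i => by
    by_cases h : i = i₁ <;> simp [hδ₁, h]
  have hδ₂pm : ∀ i, δ₂ i = 1 ∨ δ₂ i = -1 := fun i => by
    by_cases h : i = i₂ <;> simp [hδ₂, h]
  have hδ₁0 : δ₁ 0 = 1 := by simp [hδ₁, Ne.symm hi₁0, (hi₁0 : i₁ ≠ 0).symm]
  have hδ₂0 : δ₂ 0 = 1 := by simp [hδ₂, (hi₂0 : i₂ ≠ 0).symm]
  -- pick a vertex of S
  have hSne : S.Nonempty :=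
    Finset.nonempty_of_ne_empty fun h => X.empty_notMem (h ▸ hS)
  obtain ⟨w, hw⟩ := hSne
  have hwv : w ∈ X.vertices :=
    X.down_closed hS (Finset.singleton_subset_iff.2 hw) (Finset.singleton_nonempty w)
  have hw1 : w i₁ ≠ 0 := hvx w hwv i₁
  have hw2 : w i₂ ≠ 0 := hvx w hwv i₂
  set a : E := signMap δ₁ w with ha
  set b : E := signMap δ₂ w with hb
  set c : E := signMap δ₁ (signMap δ₂ w) with hc
  have haS : a ∈ S := key δ₁ hδ₁pm hδ₁0 w hw
  have hbS : b ∈ S := key δ₂ hδ₂pm hδ₂0 w hw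
  have hcS : c ∈ S := key δ₁ hδ₁pm hδ₁0 _ hbS
  -- coordinate values
  have hacoord : ∀ i, a i = δ₁ i * w i := fun i => rfl
  have hbcoord : ∀ i, b i = δ₂ i * w i := fun i => rfl
  have hccoord : ∀ i, c i = δ₁ i * (δ₂ i * w i) := fun i => rfl
  -- distinctness
  have hwa : w ≠ a := fun h => by
    have := congrArg (fun z : E => z i₁) h
    rw [hacoord] at this
    simp [hδ₁] at this
    exact hw1 (by linarith)
  have hwb : w ≠ b := fun h => by
    have := congrArg (fun z : E => z i₂) h
    rw [hbcoord] at this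
    simp [hδ₂] at this
    exact hw2 (by linarith)
  have hwc : w ≠ c := fun h => by
    have := congrArg (fun z : E => z i₁) h
    rw [hccoord] at this
    simp [hδ₁, hδ₂, hi₁₂] at this
    exact hw1 (by linarith)
  have hab : a ≠ b := fun h => by
    have := congrArg (fun z : E => z i₁) h
    rw [hacoord, hbcoord] at this
    simp [hδ₁, hδ₂, hi₁₂] at this
    exact hw1 (by linarith)
  have hac : a ≠ c := fun h => by
    have := congrArg (fun z : E => z i₂) h
    rw [hacoord, hccoord] at this
    simp [hδ₁, hδ₂, Ne.symm hi₁₂] at this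
    exact hw2 (by linarith)
  have hbc : b ≠ c := fun h => by
    have := congrArg (fun z : E => z i₁) h
    rw [hbcoord, hccoord] at this
    simp [hδ₁, hδ₂, hi₁₂] at this
    exact hw1 (by linarith)
  -- the affine relation
  have hrel : w + c = a + b := by
    ext i
    show w i + c i = a i + b i
    rw [hacoord, hbcoord, hccoord]
    by_cases h1 : i = i₁ <;> by_cases h2 : i = i₂ <;>
      simp [hδ₁, hδ₂, h1, h2, hi₁₂, Ne.symm hi₁₂] <;> ring
  -- contradiction with affine independence
  have hindep := X.indep hS
  rw [affineIndependent_iff] at hindep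
  set e₁ : {x // x ∈ S} := ⟨w, hw⟩ with he₁
  set e₂ : {x // x ∈ S} := ⟨a, haS⟩ with he₂
  set e₃ : {x // x ∈ S} := ⟨b, hbS⟩ with he₃
  set e₄ : {x // x ∈ S} := ⟨c, hcS⟩ with he₄
  set W : {x // x ∈ S} → ℝ :=
    fun x => if (x : E) = w then 1 else if (x : E) = a then -1 else
      if (x : E) = b then -1 else if (x : E) = c then 1 else 0 with hW
  set s4 : Finset {x // x ∈ S} := {e₁, e₂, e₃, e₄} with hs4
  have hW1 : W e₁ = 1 := by simp [hW, he₁]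
  have hW2 : W e₂ = -1 := by simp [hW, he₂, Ne.symm hwa]
  have hW3 : W e₃ = -1 := by simp [hW, he₃, Ne.symm hwb, Ne.symm hab]
  have hW4 : W e₄ = 1 := by simp [hW, he₄, Ne.symm hwc, Ne.symm hac, Ne.symm hbc]
  have hne12 : e₁ ≠ e₂ := fun h => hwa (congrArg Subtype.val h)
  have hne13 : e₁ ≠ e₃ := fun h => hwb (congrArg Subtype.val h)
  have hne14 : e₁ ≠ e₄ := fun h => hwc (congrArg Subtype.val h)
  have hne23 : e₂ ≠ e₃ := fun h => hab (congrArg Subtype.val h)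
  have hne24 : e₂ ≠ e₄ := fun h => hac (congrArg Subtype.val h)
  have hne34 : e₃ ≠ e₄ := fun h => hbc (congrArg Subtype.val h)
  have hsum : ∑ e ∈ s4, W e = 0 := by
    rw [hs4, Finset.sum_insert (by simp [hne12, hne13, hne14]),
      Finset.sum_insert (by simp [hne23, hne24]),
      Finset.sum_insert (by simp [hne34]), Finset.sum_singleton,
      hW1, hW2, hW3, hW4]
    ring
  have hcomb : ∑ e ∈ s4, W e • ((e : E)) = 0 := by
    rw [hs4, Finset.sum_insert (by simp [hne12, hne13, hne14]),
      Finset.sum_insert (by simp [hne23, hne24]),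
      Finset.sum_insert (by simp [hne34]), Finset.sum_singleton,
      hW1, hW2, hW3, hW4]
    have : (e₁ : E) + (e₄ : E) = (e₂ : E) + (e₃ : E) := hrel
    rw [one_smul, one_smul, neg_one_smul, neg_one_smul]
    linear_combination (norm := abel) this
  have := hindep s4 W hsum hcomb e₁ (by simp [hs4])
  rw [hW1] at this
  norm_num at this
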